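/- If f and G are bounded by L and L-Lipschitz in the path variable in sup-norm, then the cost functional J(t, x_t) = ∫_t^T f(s, X^{t,x_t}_s) ds + G(X^{t,x_t}_T) along the path-dependent ODE flow satisfies |J(t,x_t) − J(t,y_t)| ≤ L_V ‖x_t − y_t‖₀ for all x_t, y_t ∈ C([0,t];ℝ^d), where L_V depends only on L and T. -/

import Mathlib

open Set MeasureTheory

private lemma bdd_intervalIntegrable {E : Type*} [NormedAddCommGroup E]
    {h : ℝ → E} (hm : AEStronglyMeasurable h volume) {C a b : ℝ}
    (hb : ∀ s ∈ Set.uIoc a b, ‖h s‖ ≤ C) : IntervalIntegrable h volume a b := by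
  rw [intervalIntegrable_iff]
  have hconst : IntegrableOn (fun _ : ℝ => C) (Set.uIoc a b) volume :=
    integrableOn_const measure_Ioc_lt_top.ne enorm_ne_top
  exact hconst.mono' hm.restrict ((ae_restrict_iff' measurableSet_uIoc).2 (ae_of_all _ hb))

theorem stmt_12 (T L : ℝ) (hT : 0 < T) (hL : 0 < L) :
    ∃ LV : ℝ, 0 < LV ∧
      ∀ (d : ℕ) (t : ℝ) (ht : t ∈ Set.Icc (0:ℝ) T)
        (β : ℝ → C(Set.Icc (0:ℝ) T, EuclideanSpace ℝ (Fin d)) → EuclideanSpace ℝ (Fin d))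
        (f : ℝ → C(Set.Icc (0:ℝ) T, EuclideanSpace ℝ (Fin d)) → ℝ)
        (G : C(Set.Icc (0:ℝ) T, EuclideanSpace ℝ (Fin d)) → ℝ),
        (∀ x, Measurable fun s => β s x) →
        (∀ s ∈ Set.Icc (0:ℝ) T,
          ∀ x y, (∀ u : Set.Icc (0:ℝ) T, (u:ℝ) ≤ s → x u = y u) → β s x = β s y) →
        (∀ s ∈ Set.Icc (0:ℝ) T, ∀ x, ‖β s x‖ ≤ L) →
        (∀ s ∈ Set.Icc (0:ℝ) T, ∀ x y,
          ‖β s x - β s y‖ ≤ L * ⨆ u : {u : Set.Icc (0:ℝ) T // (u:ℝ) ≤ s}, ‖x u.1 - y u.1‖) →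
        (∀ x, Measurable fun s => f s x) →
        (∀ s ∈ Set.Icc (0:ℝ) T,
          ∀ x y, (∀ u : Set.Icc (0:ℝ) T, (u:ℝ) ≤ s → x u = y u) → f s x = f s y) →
        (∀ s ∈ Set.Icc (0:ℝ) T, ∀ x, |f s x| ≤ L) →
        (∀ s ∈ Set.Icc (0:ℝ) T, ∀ x y,
          |f s x - f s y| ≤ L * ⨆ u : {u : Set.Icc (0:ℝ) T // (u:ℝ) ≤ s}, ‖x u.1 - y u.1‖) →
        (∀ x, |G x| ≤ L) →
        (∀ x y, |G x - G y| ≤ L * ‖x - y‖) →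
        ∀ (ξ η : C(Set.Icc (0:ℝ) t, EuclideanSpace ℝ (Fin d)))
          (X Y : C(Set.Icc (0:ℝ) T, EuclideanSpace ℝ (Fin d))),
          (∀ u : Set.Icc (0:ℝ) T, ∀ h : (u:ℝ) ≤ t, X u = ξ ⟨(u:ℝ), ⟨u.2.1, h⟩⟩) →
          (∀ τ : Set.Icc (0:ℝ) T, t ≤ (τ:ℝ) →
            X τ = ξ ⟨t, ⟨ht.1, le_rfl⟩⟩ + ∫ s' in t..(τ:ℝ), β s' X) →
          (∀ u : Set.Icc (0:ℝ) T, ∀ h : (u:ℝ) ≤ t, Y u = η ⟨(u:ℝ), ⟨u.2.1, h⟩⟩) →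
          (∀ τ : Set.Icc (0:ℝ) T, t ≤ (τ:ℝ) →
            Y τ = η ⟨t, ⟨ht.1, le_rfl⟩⟩ + ∫ s' in t..(τ:ℝ), β s' Y) →
          |((∫ s' in t..T, f s' X) + G X) - ((∫ s' in t..T, f s' Y) + G Y)| ≤
            LV * ‖ξ - η‖ := by
  refine ⟨L * (T + 1) * Real.exp (L * T), by positivity, ?_⟩
  intro d t ht β f G hβmeas hβna hβbd hβlip hfmeas hfna hfbd hflip hGbd hGlip ξ η X Y hXi hXe hYi hYe
  have ht0 : (0:ℝ) ≤ t := ht.1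
  have htT : t ≤ T := ht.2
  set c := ‖ξ - η‖ with hc
  have hc0 : 0 ≤ c := norm_nonneg _
  set M := c + 2 * L * T with hM
  have hM0 : 0 ≤ M := by positivity
  -- initial path difference is bounded by c
  have hξη : ∀ p : Set.Icc (0:ℝ) t, ‖ξ p - η p‖ ≤ c := by
    intro p
    calc ‖ξ p - η p‖ = ‖(ξ - η) p‖ := by rw [ContinuousMap.sub_apply]
    _ ≤ c := ContinuousMap.norm_coe_le_norm _ _
  -- membership helper
  have hsub : ∀ {a b : ℝ}, a ∈ Set.Icc (0:ℝ) T → b ∈ Set.Icc (0:ℝ) T →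
      ∀ s ∈ Set.uIoc a b, s ∈ Set.Icc (0:ℝ) T := by
    intro a b ha hb s hs
    rcases hs with ⟨h1, h2⟩
    exact ⟨le_trans (le_min ha.1 hb.1) h1.le, le_trans h2 (max_le ha.2 hb.2)⟩
  have htmem : t ∈ Set.Icc (0:ℝ) T := ht
  -- integrability of the drift terms
  have hβXint : ∀ a b : ℝ, a ∈ Set.Icc (0:ℝ) T → b ∈ Set.Icc (0:ℝ) T →
      IntervalIntegrable (fun s => β s X) volume a b := by
    intro a b ha hb
    exact bdd_intervalIntegrable (hβmeas X).aestronglyMeasurable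
      (fun s hs => hβbd s (hsub ha hb s hs) X)
  have hβYint : ∀ a b : ℝ, a ∈ Set.Icc (0:ℝ) T → b ∈ Set.Icc (0:ℝ) T →
      IntervalIntegrable (fun s => β s Y) volume a b := by
    intro a b ha hb
    exact bdd_intervalIntegrable (hβmeas Y).aestronglyMeasurable
      (fun s hs => hβbd s (hsub ha hb s hs) Y)
  -- the running sup of the difference
  set g : ℝ → ℝ := fun s => ⨆ u : {u : Set.Icc (0:ℝ) T // (u:ℝ) ≤ s}, ‖X u.1 - Y u.1‖
    with hgdef
  -- pointwise bound on ‖X u - Y u‖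
  have hXYbd : ∀ u : Set.Icc (0:ℝ) T, ‖X u - Y u‖ ≤ M := by
    intro u
    by_cases hu : (u:ℝ) ≤ t
    · rw [hXi u hu, hYi u hu]
      have := hξη ⟨(u:ℝ), ⟨u.2.1, hu⟩⟩
      nlinarith
    · have hut : t ≤ (u:ℝ) := le_of_not_ge hu
      rw [hXe u hut, hYe u hut]
      have h1 : ‖∫ s in t..(u:ℝ), β s X‖ ≤ L * |(u:ℝ) - t| :=
        intervalIntegral.norm_integral_le_of_norm_le_const
          (fun s hs => hβbd s (hsub htmem u.2 s hs) X)
      have h2 : ‖∫ s in t..(u:ℝ), β s Y‖ ≤ L * |(u:ℝ) - t| :=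
        intervalIntegral.norm_integral_le_of_norm_le_const
          (fun s hs => hβbd s (hsub htmem u.2 s hs) Y)
      have habs : |(u:ℝ) - t| ≤ T := by
        rw [abs_of_nonneg (by linarith)]
        have := u.2.2
        linarith
      have h3 := hξη ⟨t, ⟨ht0, le_rfl⟩⟩
      calc ‖(ξ ⟨t, ⟨ht.1, le_rfl⟩⟩ + ∫ s in t..(u:ℝ), β s X) -
              (η ⟨t, ⟨ht.1, le_rfl⟩⟩ + ∫ s in t..(u:ℝ), β s Y)‖
          = ‖(ξ ⟨t, ⟨ht.1, le_rfl⟩⟩ - η ⟨t, ⟨ht.1, le_rfl⟩⟩) +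
              ((∫ s in t..(u:ℝ), β s X) - ∫ s in t..(u:ℝ), β s Y)‖ := by congr 1; abel
        _ ≤ ‖ξ ⟨t, ⟨ht.1, le_rfl⟩⟩ - η ⟨t, ⟨ht.1, le_rfl⟩⟩‖ +
              ‖(∫ s in t..(u:ℝ), β s X) - ∫ s in t..(u:ℝ), β s Y‖ := norm_add_le _ _
        _ ≤ c + (‖∫ s in t..(u:ℝ), β s X‖ + ‖∫ s in t..(u:ℝ), β s Y‖) :=
            add_le_add h3 (norm_sub_le _ _)
        _ ≤ M := by nlinarith
  have hbdd : ∀ s : ℝ,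
      BddAbove (Set.range fun u : {u : Set.Icc (0:ℝ) T // (u:ℝ) ≤ s} => ‖X u.1 - Y u.1‖) := by
    intro s
    refine ⟨M, ?_⟩
    rintro x ⟨u, rfl⟩
    exact hXYbd u.1
  have hgnn : ∀ s, 0 ≤ g s := fun s => Real.iSup_nonneg fun u => norm_nonneg _
  have hgleM : ∀ s, g s ≤ M := fun s => Real.iSup_le (fun u => hXYbd u.1) hM0
  have hpt : ∀ (u : Set.Icc (0:ℝ) T) (s : ℝ), (u:ℝ) ≤ s → ‖X u - Y u‖ ≤ g s := by
    intro u s hus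
    exact le_ciSup (hbdd s) (⟨u, hus⟩ : {u : Set.Icc (0:ℝ) T // (u:ℝ) ≤ s})
  have hgmono : Monotone g := by
    intro s s' hss'
    refine Real.iSup_le (fun u => ?_) (hgnn s')
    exact le_ciSup (hbdd s') (⟨u.1, le_trans u.2 hss'⟩ : {u : Set.Icc (0:ℝ) T // (u:ℝ) ≤ s'})
  have hgint : ∀ a b : ℝ, IntervalIntegrable g volume a b := fun a b =>
    hgmono.intervalIntegrable
  -- key integral inequality
  have hkey : ∀ τ : ℝ, τ ∈ Set.Icc t T → g τ ≤ c + L * ∫ s in t..τ, g s := by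
    intro τ hτ
    have hintnn : 0 ≤ ∫ s in t..τ, g s :=
      intervalIntegral.integral_nonneg hτ.1 fun s _ => hgnn s
    refine Real.iSup_le ?_ (by positivity)
    rintro ⟨u, hu⟩
    by_cases hut : (u:ℝ) ≤ t
    · rw [hXi u hut, hYi u hut]
      have := hξη ⟨(u:ℝ), ⟨u.2.1, hut⟩⟩
      nlinarith
    · have htu : t ≤ (u:ℝ) := le_of_not_ge hut
      have humem : (u:ℝ) ∈ Set.Icc (0:ℝ) T := u.2
      have hdint := hβXint t u htmem humem
      have hdint' := hβYint t u htmem humem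
      have hdec : X u - Y u = (ξ ⟨t, ⟨ht.1, le_rfl⟩⟩ - η ⟨t, ⟨ht.1, le_rfl⟩⟩) +
          ∫ s in t..(u:ℝ), (β s X - β s Y) := by
        rw [hXe u htu, hYe u htu, intervalIntegral.integral_sub hdint hdint']
        abel
      have hnint : IntervalIntegrable (fun s => ‖β s X - β s Y‖) volume t (u:ℝ) := by
        refine bdd_intervalIntegrable (((hβmeas X).sub (hβmeas Y)).norm).aestronglyMeasurable
          (C := 2 * L) (fun s hs => ?_)
        have hsm := hsub htmem humem s hs
        have := norm_sub_le (β s X) (β s Y)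
        have b1 := hβbd s hsm X
        have b2 := hβbd s hsm Y
        simp only [Pi.sub_apply, Real.norm_eq_abs, abs_of_nonneg (norm_nonneg _)]
        linarith
      have hLgint : IntervalIntegrable (fun s => L * g s) volume t (u:ℝ) :=
        (hgint t u).const_mul L
      have hstep : ∫ s in t..(u:ℝ), ‖β s X - β s Y‖ ≤ ∫ s in t..(u:ℝ), L * g s := by
        refine intervalIntegral.integral_mono_on htu hnint hLgint (fun s hs => ?_)
        exact hβlip s ⟨le_trans ht0 hs.1, le_trans hs.2 humem.2⟩ X Y
      have hmono2 : ∫ s in t..(u:ℝ), g s ≤ ∫ s in t..τ, g s := by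
        have hsplit := intervalIntegral.integral_add_adjacent_intervals (hgint t u) (hgint u τ)
        have h2 : 0 ≤ ∫ s in (u:ℝ)..τ, g s :=
          intervalIntegral.integral_nonneg hu fun s _ => hgnn s
        linarith
      calc ‖X u - Y u‖
          ≤ ‖ξ ⟨t, ⟨ht.1, le_rfl⟩⟩ - η ⟨t, ⟨ht.1, le_rfl⟩⟩‖ +
            ‖∫ s in t..(u:ℝ), (β s X - β s Y)‖ := by rw [hdec]; exact norm_add_le _ _
        _ ≤ c + ∫ s in t..(u:ℝ), ‖β s X - β s Y‖ :=
            add_le_add (hξη _) (intervalIntegral.norm_integral_le_integral_norm htu)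
        _ ≤ c + ∫ s in t..(u:ℝ), L * g s := add_le_add (le_refl c) hstep
        _ = c + L * ∫ s in t..(u:ℝ), g s := by rw [intervalIntegral.integral_const_mul]
        _ ≤ c + L * ∫ s in t..τ, g s := by nlinarith
  -- Gronwall iteration
  have hgron : ∀ n : ℕ, ∀ τ ∈ Set.Icc t T,
      g τ ≤ c * Real.exp (L * (τ - t)) + M * ((L * (τ - t)) ^ n / n.factorial) := by
    intro n
    induction n with
    | zero =>
      intro τ hτ
      have h1 := hgleM τ
      have h2 : 0 ≤ c * Real.exp (L * (τ - t)) := by positivity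
      simpa using by linarith
    | succ n ih =>
      intro τ hτ
      have hfact : (0:ℝ) < n.factorial := by positivity
      have h1 : g τ ≤ c + L * ∫ s in t..τ, g s := hkey τ hτ
      have hc1 : Continuous fun s : ℝ => L * (s - t) :=
        continuous_const.mul (continuous_id.sub continuous_const)
      have hcont : Continuous fun s : ℝ =>
          c * Real.exp (L * (s - t)) + M * ((L * (s - t)) ^ n / n.factorial) :=
        (continuous_const.mul (Real.continuous_exp.comp hc1)).add
          (continuous_const.mul ((hc1.pow n).div_const _))
      have h2 : ∫ s in t..τ, g s ≤ ∫ s in t..τ,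
          (c * Real.exp (L * (s - t)) + M * ((L * (s - t)) ^ n / n.factorial)) := by
        refine intervalIntegral.integral_mono_on hτ.1 (hgint t τ)
          (hcont.intervalIntegrable t τ) (fun s hs => ?_)
        exact ih s ⟨hs.1, le_trans hs.2 hτ.2⟩
      have hI1 : ∫ s in t..τ, Real.exp (L * (s - t))
          = L⁻¹ * (Real.exp (L * (τ - t)) - 1) := by
        rw [intervalIntegral.integral_comp_sub_right (fun x => Real.exp (L * x)) t]
        rw [intervalIntegral.integral_comp_mul_left (fun x => Real.exp x) hL.ne']
        simp [integral_exp, smul_eq_mul]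
      have hI2 : ∫ s in t..τ, (L * (s - t)) ^ n
          = L⁻¹ * ((L * (τ - t)) ^ (n + 1) / (n + 1)) := by
        rw [intervalIntegral.integral_comp_sub_right (fun x => (L * x) ^ n) t]
        rw [intervalIntegral.integral_comp_mul_left (fun x => x ^ n) hL.ne']
        simp [integral_pow, smul_eq_mul, sub_self, mul_comm]
      have hIsum : ∫ s in t..τ,
          (c * Real.exp (L * (s - t)) + M * ((L * (s - t)) ^ n / n.factorial))
          = c * (L⁻¹ * (Real.exp (L * (τ - t)) - 1)) +
            (M / n.factorial) * (L⁻¹ * ((L * (τ - t)) ^ (n + 1) / (n + 1))) := by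
        rw [← hI1, ← hI2]
        rw [← intervalIntegral.integral_const_mul, ← intervalIntegral.integral_const_mul,
          ← intervalIntegral.integral_add]
        · exact intervalIntegral.integral_congr (fun s _ => by ring)
        · exact (continuous_const.mul (Real.continuous_exp.comp hc1)).intervalIntegrable t τ
        · exact (continuous_const.mul (hc1.pow n)).intervalIntegrable t τ
      have hcast : ((n + 1 : ℕ).factorial : ℝ) = (n + 1) * n.factorial := by
        push_cast [Nat.factorial_succ]; ring
      calc g τ ≤ c + L * ∫ s in t..τ, g s := h1
        _ ≤ c + L * (c * (L⁻¹ * (Real.exp (L * (τ - t)) - 1)) +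
            (M / n.factorial) * (L⁻¹ * ((L * (τ - t)) ^ (n + 1) / (n + 1)))) := by
            rw [← hIsum]; nlinarith
        _ = c * Real.exp (L * (τ - t)) +
            M * ((L * (τ - t)) ^ (n + 1) / (n + 1).factorial) := by
            rw [hcast]
            field_simp
            ring
  -- pass to the limit
  have hgT : g T ≤ c * Real.exp (L * (T - t)) := by
    have htend : Filter.Tendsto
        (fun n : ℕ => c * Real.exp (L * (T - t)) + M * ((L * (T - t)) ^ n / n.factorial))
        Filter.atTop (nhds (c * Real.exp (L * (T - t)) + M * 0)) :=
      Filter.Tendsto.add tendsto_const_nhds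
        ((FloorSemiring.tendsto_pow_div_factorial_atTop (L * (T - t))).const_mul M)
    have := ge_of_tendsto htend
      (Filter.Eventually.of_forall fun n => hgron n T ⟨htT, le_rfl⟩)
    simpa using this
  have hgTT : g T ≤ c * Real.exp (L * T) := by
    refine hgT.trans ?_
    have : Real.exp (L * (T - t)) ≤ Real.exp (L * T) := by
      apply Real.exp_le_exp.2; nlinarith
    nlinarith
  -- sup-norm bound on X - Y
  have hnorm : ‖X - Y‖ ≤ g T := by
    refine (ContinuousMap.norm_le _ (hgnn T)).2 fun u => ?_
    rw [ContinuousMap.sub_apply]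
    exact hpt u T u.2.2
  -- integrability of f terms
  have hfXint : IntervalIntegrable (fun s => f s X) volume t T :=
    bdd_intervalIntegrable (hfmeas X).aestronglyMeasurable (C := L)
      (fun s hs => by
        have := hfbd s (hsub htmem ⟨hT.le, le_rfl⟩ s hs) X
        simpa [Real.norm_eq_abs] using this)
  have hfYint : IntervalIntegrable (fun s => f s Y) volume t T :=
    bdd_intervalIntegrable (hfmeas Y).aestronglyMeasurable (C := L)
      (fun s hs => by
        have := hfbd s (hsub htmem ⟨hT.le, le_rfl⟩ s hs) Y
        simpa [Real.norm_eq_abs] using this)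
  have hgT0 : 0 ≤ g T := hgnn T
  -- bound on the integral part
  have hJ1 : |(∫ s in t..T, f s X) - ∫ s in t..T, f s Y| ≤ L * T * g T := by
    rw [← intervalIntegral.integral_sub hfXint hfYint]
    have habs : |∫ s in t..T, (f s X - f s Y)| ≤ ∫ s in t..T, |f s X - f s Y| := by
      simpa [Real.norm_eq_abs] using
        intervalIntegral.norm_integral_le_integral_norm
          (f := fun s => f s X - f s Y) (μ := volume) (a := t) (b := T) htT
    have hdiffint : IntervalIntegrable (fun s => |f s X - f s Y|) volume t T := by
      refine bdd_intervalIntegrable (((hfmeas X).sub (hfmeas Y)).abs).aestronglyMeasurable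
        (C := 2 * L) (fun s hs => ?_)
      have hsm := hsub htmem ⟨hT.le, le_rfl⟩ s hs
      have b1 := hfbd s hsm X
      have b2 := hfbd s hsm Y
      have := abs_sub (f s X) (f s Y)
      simp only [Real.norm_eq_abs, abs_abs]
      calc |f s X - f s Y| ≤ |f s X| + |f s Y| := abs_sub _ _
        _ ≤ 2 * L := by linarith
    have hmono : ∫ s in t..T, |f s X - f s Y| ≤ ∫ s in t..T, L * g T := by
      refine intervalIntegral.integral_mono_on htT hdiffint
        (intervalIntegrable_const) (fun s hs => ?_)
      have hsm : s ∈ Set.Icc (0:ℝ) T := ⟨le_trans ht0 hs.1, hs.2⟩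
      refine (hflip s hsm X Y).trans ?_
      exact mul_le_mul_of_nonneg_left (hgmono hs.2) hL.le
    have hconst : ∫ s in t..T, L * g T = (T - t) * (L * g T) := by
      simp [intervalIntegral.integral_const, smul_eq_mul]
      ring
    nlinarith [mul_nonneg ht0 (mul_nonneg hL.le hgT0)]
  have hJ2 : |G X - G Y| ≤ L * g T :=
    (hGlip X Y).trans (mul_le_mul_of_nonneg_left hnorm hL.le)
  -- conclusion
  have hfinal : |((∫ s' in t..T, f s' X) + G X) - ((∫ s' in t..T, f s' Y) + G Y)|
      ≤ L * T * g T + L * g T := by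
    have : ((∫ s' in t..T, f s' X) + G X) - ((∫ s' in t..T, f s' Y) + G Y)
        = ((∫ s' in t..T, f s' X) - ∫ s' in t..T, f s' Y) + (G X - G Y) := by ring
    rw [this]
    exact (abs_add_le _ _).trans (add_le_add hJ1 hJ2)
  have hE : (0:ℝ) < Real.exp (L * T) := Real.exp_pos _
  calc |((∫ s' in t..T, f s' X) + G X) - ((∫ s' in t..T, f s' Y) + G Y)|
      ≤ L * T * g T + L * g T := hfinal
    _ = L * (T + 1) * g T := by ring
    _ ≤ L * (T + 1) * (c * Real.exp (L * T)) := by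
        refine mul_le_mul_of_nonneg_left hgTT (by positivity)
    _ = L * (T + 1) * Real.exp (L * T) * c := by ring
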